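/- Let (a_i,b_i)_{i=1}^s be a composition of positive integers and let λ ∈ ℂ not be a positive integer. For m_1 > ⋯ > m_{B_s} ≥ 1 and 1 ≤ j ≤ B_s define C_{m_j}^{m_1,…,m_{B_s}} := (∏_{i=1}^s m_{B_{i−1}+1}^{−a_i}) · ∏_{i≠j} (m_i − m_j)^{−1}. Then (i) for each fixed j the series Σ_{m_1>⋯>m_{B_s}≥1} | C_{m_j}^{m_1,…,m_{B_s}} / (m_j − λ) | converges; and (ii) f((a_i,b_i)_{i=1}^s;λ) = Σ_{p=1}^∞ r_p/(p−λ), where r_p := Σ_{j=1}^{B_s} Σ_{m_1>⋯>m_{j−1}>p>m_{j+1}>⋯>m_{B_s}≥1} C_p^{m_1,…,m_{j−1},p,m_{j+1},…,m_{B_s}} (with m_j set equal to p). -/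

import Mathlib

/-- Strictly decreasing tuples `m 0 > m 1 > ⋯ > m (N-1) ≥ 1` of positive integers,
padded by `0` from position `N` on. -/
def DecTuple (N : ℕ) : Set (ℕ → ℕ) :=
  {m | (∀ j, j + 1 < N → m (j + 1) < m j) ∧ (∀ j, j < N → 1 ≤ m j) ∧ ∀ j, N ≤ j → m j = 0}

/-- The generating function `f((aᵢ,bᵢ)ᵢ₌₁ˢ;λ)` of the Ohno sums:
`Σ_{m₁>⋯>m_{B_s}≥1} Π_i m_{B_{i-1}+1}^{-aᵢ} Π_{j=B_{i-1}+1}^{B_i} (m_j-λ)⁻¹`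
(indices are 0-based here, so `B_{i-1}` is `∑_{t<i} b t`). -/
noncomputable def genF (s : ℕ) (a b : ℕ → ℕ) (lam : ℂ) : ℂ :=
  ∑' m : DecTuple (∑ j ∈ Finset.range s, b j),
    ∏ i ∈ Finset.range s,
      ((m.1 (∑ t ∈ Finset.range i, b t) : ℂ) ^ a i)⁻¹ *
        ∏ j ∈ Finset.Ico (∑ t ∈ Finset.range i, b t) (∑ t ∈ Finset.range (i + 1), b t),
          ((m.1 j : ℂ) - lam)⁻¹

/-- The coefficient `C_{m_j}^{m₁,…,m_{B_s}} = (Π_i m_{B_{i-1}+1}^{-aᵢ}) Π_{i≠j} (mᵢ-m_j)⁻¹`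
(0-based indices). -/
noncomputable def Ccoef (s : ℕ) (a b : ℕ → ℕ) (m : ℕ → ℕ) (j : ℕ) : ℂ :=
  (∏ i ∈ Finset.range s, ((m (∑ t ∈ Finset.range i, b t) : ℂ) ^ a i)⁻¹) *
    ∏ i ∈ (Finset.range (∑ t ∈ Finset.range s, b t)).erase j,
      ((m i : ℂ) - (m j : ℂ))⁻¹

/-- The residue `r_p = Σ_{j=1}^{B_s} Σ_{m₁>⋯>m_{j-1}>p>m_{j+1}>⋯>m_{B_s}≥1}
C_p^{m₁,…,p,…,m_{B_s}}`, realized by summing over strictly decreasing tuples whose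
`j`-th entry equals `p`. -/
noncomputable def resCoef (s : ℕ) (a b : ℕ → ℕ) (p : ℕ) : ℂ :=
  ∑ j ∈ Finset.range (∑ t ∈ Finset.range s, b t),
    ∑' m : {m : ℕ → ℕ // m ∈ DecTuple (∑ t ∈ Finset.range s, b t) ∧ m j = p},
      Ccoef s a b m.1 j

open Finset

namespace DecTupleAux

variable {N : ℕ} {m : ℕ → ℕ}

lemma step (hm : m ∈ DecTuple N) (k : ℕ) : m (k + 1) ≤ m k := by
  rcases lt_or_ge (k + 1) N with h | h
  · exact (hm.1 k h).le
  · rw [hm.2.2 _ h]; exact Nat.zero_le _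

lemma anti (hm : m ∈ DecTuple N) {i j : ℕ} (h : i ≤ j) : m j ≤ m i := by
  induction j, h using Nat.le_induction with
  | base => exact le_rfl
  | succ n hn ih => exact (step hm n).trans ih

lemma gap_pos (hm : m ∈ DecTuple N) {k : ℕ} (hk : k < N) : m (k + 1) < m k := by
  rcases lt_or_ge (k + 1) N with h | h
  · exact hm.1 k h
  · rw [hm.2.2 _ h]; exact hm.2.1 k hk

lemma strict (hm : m ∈ DecTuple N) {i j : ℕ} (hij : i < j) (hj : j < N) : m j < m i := by
  have hi : i < N := hij.trans hj
  calc m j ≤ m (i + 1) := anti hm hij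
  _ < m i := gap_pos hm hi

lemma gap_ge_one (hm : m ∈ DecTuple N) {k : ℕ} (hk : k < N) : 1 ≤ m k - m (k + 1) := by
  have := gap_pos hm hk; omega

/-- gap map -/
def gmap (N : ℕ) (m : ℕ → ℕ) : Fin N → ℕ := fun k => m k - m (k + 1) - 1

lemma gmap_add_one (hm : m ∈ DecTuple N) (k : Fin N) :
    gmap N m k + 1 = m k - m (k + 1) := by
  have := gap_ge_one hm k.2
  simp only [gmap]
  omega

lemma gmap_inj (hm : m ∈ DecTuple N) {m' : ℕ → ℕ} (hm' : m' ∈ DecTuple N)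
    (h : gmap N m = gmap N m') : m = m' := by
  have key : ∀ t j, N ≤ j + t → m j = m' j := by
    intro t
    induction t with
    | zero => intro j hj; rw [hm.2.2 j (by omega), hm'.2.2 j (by omega)]
    | succ t ih =>
      intro j hj
      rcases le_or_gt N j with h' | h'
      · rw [hm.2.2 j h', hm'.2.2 j h']
      · have h1 : m (j + 1) = m' (j + 1) := ih (j + 1) (by omega)
        have h2 : gmap N m ⟨j, h'⟩ = gmap N m' ⟨j, h'⟩ := by rw [h]
        have h3 := gap_ge_one hm h'
        have h4 := gap_ge_one hm' h'
        have h5 := step hm j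
        have h6 := step hm' j
        simp only [gmap, Fin.val_mk] at h2
        omega
  funext j
  exact key (N + 1) j (by omega)

lemma summable_pi_prod {h : ℕ → ℝ} (h0 : ∀ n, 0 ≤ h n) (hs : Summable h) (N : ℕ) :
    Summable fun g : Fin N → ℕ => ∏ k, h (g k) := by
  induction N with
  | zero => exact Summable.of_finite
  | succ n ih =>
    have hnn1 : 0 ≤ h := h0
    have hnn2 : 0 ≤ fun g : Fin n → ℕ => ∏ k, h (g k) :=
      fun g => Finset.prod_nonneg fun k _ => h0 _
    have hf := hs.mul_of_nonneg ih hnn1 hnn2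
    have h2 := hf.comp_injective (Fin.consEquiv fun _ : Fin (n + 1) => ℕ).symm.injective
    refine h2.congr fun g => ?_
    simp only [Function.comp_apply, Fin.consEquiv_symm_apply, Fin.prod_univ_succ]
    rfl

lemma summable_h {e : ℝ} (he : e < -1) : Summable fun n : ℕ => ((n : ℝ) + 1) ^ e := by
  have h1 : Summable fun n : ℕ => (n : ℝ) ^ e := Real.summable_nat_rpow.2 he
  have h2 := (summable_nat_add_iff 1).2 h1
  refine h2.congr fun n => ?_
  push_cast
  rfl

lemma exists_lam_bound (lam : ℂ) :
    ∃ C : ℝ, 0 < C ∧ ∀ n : ℕ, 1 ≤ n → ‖((n : ℂ) - lam)⁻¹‖ ≤ C * ((n : ℝ))⁻¹ := by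
  set K : ℕ := ⌈2 * ‖lam‖⌉₊ + 1 with hK
  set C : ℝ := 2 + ∑ n ∈ Finset.Ico 1 K, (n : ℝ) * ‖((n : ℂ) - lam)⁻¹‖ with hC
  have hsumnn : 0 ≤ ∑ n ∈ Finset.Ico 1 K, (n : ℝ) * ‖((n : ℂ) - lam)⁻¹‖ :=
    Finset.sum_nonneg fun n _ => mul_nonneg (Nat.cast_nonneg n) (norm_nonneg _)
  refine ⟨C, by positivity, fun n hn => ?_⟩
  have hnpos : (0 : ℝ) < (n : ℝ) := by exact_mod_cast hn
  rw [← div_eq_mul_inv, le_div_iff₀ hnpos]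
  have key : ‖((n : ℂ) - lam)⁻¹‖ * (n : ℝ) ≤ C := by
    rcases lt_or_ge n K with h | h
    · have hmem : n ∈ Finset.Ico 1 K := Finset.mem_Ico.2 ⟨hn, h⟩
      have := Finset.single_le_sum
        (f := fun n : ℕ => (n : ℝ) * ‖((n : ℂ) - lam)⁻¹‖)
        (fun i _ => mul_nonneg (Nat.cast_nonneg i) (norm_nonneg _)) hmem
      rw [hC]; nlinarith [this]
    · have h2 : 2 * ‖lam‖ ≤ (K - 1 : ℕ) := by
        have := Nat.le_ceil (2 * ‖lam‖)
        simp only [hK, Nat.add_sub_cancel]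
        exact_mod_cast this
      have h3 : 2 * ‖lam‖ ≤ (n : ℝ) := le_trans h2 (by exact_mod_cast Nat.sub_le_of_le_add (by omega))
      have h4 : (n : ℝ) / 2 ≤ ‖(n : ℂ) - lam‖ := by
        have := norm_sub_norm_le ((n : ℂ)) lam
        rw [Complex.norm_natCast] at this
        linarith
      have h5 : (0:ℝ) < ‖(n : ℂ) - lam‖ := lt_of_lt_of_le (by positivity) h4
      rw [norm_inv]
      have h7 : ‖(n:ℂ) - lam‖⁻¹ ≤ ((n : ℝ)/2)⁻¹ := inv_anti₀ (by positivity) h4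
      calc ‖(n:ℂ) - lam‖⁻¹ * (n:ℝ) ≤ ((n:ℝ)/2)⁻¹ * n := by nlinarith
      _ = 2 := by field_simp
      _ ≤ C := by rw [hC]; linarith
  linarith [key]

lemma key_ineq (hN : 0 < N) (hm : m ∈ DecTuple N) (x : Fin N → ℝ)
    (hx : ∀ k : Fin N, ((m k - m (k + 1) : ℕ) : ℝ) ≤ x k) :
    (m 0 : ℝ)⁻¹ * ∏ k, (x k)⁻¹ ≤
      ∏ k : Fin N, ((m k - m (k + 1) : ℕ) : ℝ) ^ (-(1 + (N : ℝ)⁻¹)) := by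
  set d : Fin N → ℝ := fun k => ((m k - m (k + 1) : ℕ) : ℝ) with hd
  have hd1 : ∀ k, 1 ≤ d k := fun k => by simp only [hd]; exact_mod_cast gap_ge_one hm k.2
  have hd0 : ∀ k, 0 < d k := fun k => lt_of_lt_of_le one_pos (hd1 k)
  have hx0 : ∀ k, 0 < x k := fun k => lt_of_lt_of_le (hd0 k) (hx k)
  set P : ℝ := ∏ k, d k with hP
  have hP0 : 0 < P := Finset.prod_pos fun k _ => hd0 k
  have hm0 : 1 ≤ m 0 := hm.2.1 0 hN
  have hm0R : (1 : ℝ) ≤ (m 0 : ℝ) := by exact_mod_cast hm0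
  have step2 : P ≤ (m 0 : ℝ) ^ (N : ℕ) := by
    rw [hP]
    calc ∏ k, d k ≤ ∏ _k : Fin N, (m 0 : ℝ) := by
          refine Finset.prod_le_prod (fun k _ => (hd0 k).le) (fun k _ => ?_)
          have h1 : m k - m (k + 1) ≤ m 0 := le_trans (Nat.sub_le _ _) (anti hm (Nat.zero_le _))
          simp only [hd]; exact_mod_cast h1
    _ = (m 0 : ℝ) ^ (N : ℕ) := by rw [Finset.prod_const, Finset.card_univ, Fintype.card_fin]
  have hNR : (0 : ℝ) < (N : ℝ) := by exact_mod_cast hN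
  have h6 : P ^ ((N : ℝ)⁻¹) ≤ (m 0 : ℝ) := by
    calc P ^ ((N : ℝ)⁻¹) ≤ ((m 0 : ℝ) ^ (N : ℕ)) ^ ((N : ℝ)⁻¹) :=
          Real.rpow_le_rpow hP0.le step2 (by positivity)
    _ = (m 0 : ℝ) := by
          rw [← Real.rpow_natCast (m 0 : ℝ) N, ← Real.rpow_mul (by linarith),
            mul_inv_cancel₀ (ne_of_gt hNR), Real.rpow_one]
  have step3 : (m 0 : ℝ)⁻¹ ≤ P ^ (-(N : ℝ)⁻¹) := by
    rw [Real.rpow_neg hP0.le]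
    exact inv_anti₀ (Real.rpow_pos_of_pos hP0 _) h6
  have step1 : ∏ k, (x k)⁻¹ ≤ ∏ k, (d k)⁻¹ :=
    Finset.prod_le_prod (fun k _ => (inv_pos.2 (hx0 k)).le)
      (fun k _ => inv_anti₀ (hd0 k) (hx k))
  have step4 : (m 0 : ℝ)⁻¹ * ∏ k, (x k)⁻¹ ≤ P ^ (-(N : ℝ)⁻¹) * ∏ k, (d k)⁻¹ :=
    mul_le_mul step3 step1 (Finset.prod_nonneg fun k _ => (inv_pos.2 (hx0 k)).le)
      (Real.rpow_pos_of_pos hP0 _).le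
  refine le_trans step4 (le_of_eq ?_)
  rw [hP, ← Real.finset_prod_rpow _ _ (fun k _ => (hd0 k).le), ← Finset.prod_mul_distrib]
  refine Finset.prod_congr rfl fun k _ => ?_
  rw [← Real.rpow_neg_one (d k), ← Real.rpow_add (hd0 k)]
  norm_num
  rfl

lemma block_prod {M : Type*} [CommMonoid M] (b : ℕ → ℕ) (f : ℕ → M) (s : ℕ) :
    ∏ i ∈ range s, ∏ j ∈ Ico (∑ t ∈ range i, b t) (∑ t ∈ range (i + 1), b t), f j
      = ∏ j ∈ range (∑ t ∈ range s, b t), f j := by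
  induction s with
  | zero => simp
  | succ s ih =>
    rw [Finset.prod_range_succ, ih]
    have hle : (∑ t ∈ range s, b t) ≤ ∑ t ∈ range (s + 1), b t :=
      Finset.sum_le_sum_of_subset (Finset.range_subset_range.2 (Nat.le_succ s))
    have e1 : range (∑ t ∈ range s, b t) = Ico 0 (∑ t ∈ range s, b t) :=
      Finset.range_eq_Ico _
    have e2 : range (∑ t ∈ range (s + 1), b t) = Ico 0 (∑ t ∈ range (s + 1), b t) :=
      Finset.range_eq_Ico _
    rw [e1, e2]
    exact Finset.prod_Ico_consecutive f (Nat.zero_le _) hle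

lemma erase_prod_bound_succ {j : ℕ} (hm : m ∈ DecTuple (N + 1)) (hj : j < N + 1) :
    ∏ k : Fin (N + 1), ((m k - m (k + 1) : ℕ) : ℝ) ≤
      (∏ i ∈ (range (N + 1)).erase j, ‖((m i : ℂ) - (m j : ℂ))‖) * (m j : ℝ) := by
  set φ : ℕ → ℕ := fun k => if k < j then k else k + 1 with hφ
  set ψ : ℕ → ℕ := fun i => if i < j then i else i - 1 with hψ
  have hφψ : ∀ i, i ≠ j → i < N + 1 → φ (ψ i) = i := by
    intro i hij hiN
    simp only [hφ, hψ]
    rcases lt_or_gt_of_ne hij with h | h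
    · rw [if_pos h, if_pos h]
    · rw [if_neg (by omega : ¬ i < j), if_neg (by omega : ¬ i - 1 < j)]; omega
  have hψφ : ∀ k, ψ (φ k) = k := by
    intro k; simp only [hφ, hψ]
    rcases lt_or_ge k j with h | h
    · rw [if_pos h, if_pos h]
    · rw [if_neg (by omega : ¬ k < j), if_neg (by omega : ¬ k + 1 < j)]; omega
  rw [← Finset.prod_range (n := N + 1) (fun k => ((m k - m (k + 1) : ℕ) : ℝ)),
    Finset.prod_range_succ]
  have hlast : ((m N - m (N + 1) : ℕ) : ℝ) ≤ (m j : ℝ) := by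
    have h0 : m (N + 1) = 0 := hm.2.2 _ le_rfl
    have h1 : m N ≤ m j := anti hm (by omega)
    have : m N - m (N + 1) ≤ m j := by omega
    exact_mod_cast this
  have hmain : ∏ k ∈ range N, ((m k - m (k + 1) : ℕ) : ℝ) ≤
      ∏ i ∈ (range (N + 1)).erase j, ‖((m i : ℂ) - (m j : ℂ))‖ := by
    have hre : ∏ i ∈ (range (N + 1)).erase j, ‖((m i : ℂ) - (m j : ℂ))‖ =
        ∏ k ∈ range N, ‖((m (φ k) : ℂ) - (m j : ℂ))‖ := by
      refine Finset.prod_nbij' ψ φ ?_ ?_ ?_ ?_ ?_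
      · intro i hi
        simp only [Finset.mem_erase, Finset.mem_range] at hi
        simp only [hψ, Finset.mem_range]
        split <;> omega
      · intro k hk
        simp only [Finset.mem_range] at hk
        simp only [hφ, Finset.mem_erase, Finset.mem_range]
        split <;> omega
      · intro i hi
        simp only [Finset.mem_erase, Finset.mem_range] at hi
        exact hφψ i hi.1 hi.2
      · intro k _
        exact hψφ k
      · intro i hi
        simp only [Finset.mem_erase, Finset.mem_range] at hi
        rw [hφψ i hi.1 hi.2]
    rw [hre]
    refine Finset.prod_le_prod (fun k _ => by positivity) (fun k hk => ?_)
    simp only [Finset.mem_range] at hk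
    rcases lt_or_ge k j with h | h
    · rw [hφ]; simp only [if_pos h]
      have h1 : m j ≤ m (k + 1) := anti hm h
      have h2 : m (k + 1) ≤ m k := step hm k
      rw [show ((m k : ℂ) - (m j : ℂ)) = ((m k - m j : ℕ) : ℂ) by
        rw [Nat.cast_sub (h1.trans h2)], Complex.norm_natCast]
      have : m k - m (k + 1) ≤ m k - m j := by omega
      exact_mod_cast this
    · rw [hφ]; simp only [if_neg (not_lt.2 h)]
      have h1 : m (k + 1) ≤ m j := anti hm (by omega)
      have h2 : m k ≤ m j := anti hm h
      have h5 : m (k + 1) ≤ m k := step hm k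
      rw [norm_sub_rev, show ((m j : ℂ) - (m (k + 1) : ℂ)) = ((m j - m (k + 1) : ℕ) : ℂ) by
          rw [Nat.cast_sub h1], Complex.norm_natCast]
      have : m k - m (k + 1) ≤ m j - m (k + 1) := by omega
      exact_mod_cast this
  exact mul_le_mul hmain hlast (by positivity)
    (Finset.prod_nonneg fun i _ => norm_nonneg _)

lemma erase_prod_bound {N : ℕ} {m : ℕ → ℕ} {j : ℕ} (hm : m ∈ DecTuple N) (hj : j < N) :
    ∏ k : Fin N, ((m k - m (k + 1) : ℕ) : ℝ) ≤
      (∏ i ∈ (range N).erase j, ‖((m i : ℂ) - (m j : ℂ))‖) * (m j : ℝ) := by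
  obtain ⟨n, rfl⟩ : ∃ n, N = n + 1 := ⟨N - 1, by omega⟩
  exact erase_prod_bound_succ hm hj

lemma pow_prod_le {s : ℕ} {a b : ℕ → ℕ} (hm : m ∈ DecTuple N) (hs : 1 ≤ s)
    (ha0 : 1 ≤ a 0) (hb : ∀ i, i < s → 1 ≤ b i) (hN : N = ∑ t ∈ range s, b t) :
    ∏ i ∈ range s, ‖((m (∑ t ∈ range i, b t) : ℂ) ^ a i)⁻¹‖ ≤ (m 0 : ℝ)⁻¹ := by
  have hfac : ∀ i : ℕ, ‖((m (∑ t ∈ range i, b t) : ℂ) ^ a i)⁻¹‖ =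
      (((m (∑ t ∈ range i, b t) : ℝ)) ^ a i)⁻¹ := by
    intro i
    rw [norm_inv, norm_pow, Complex.norm_natCast]
  have hBlt : ∀ i, i < s → (∑ t ∈ range i, b t) < N := by
    intro i hi
    have h1 : (∑ t ∈ range (i + 1), b t) ≤ N := by
      rw [hN]; exact Finset.sum_le_sum_of_subset (Finset.range_subset_range.2 hi)
    rw [Finset.sum_range_succ] at h1
    have := hb i hi
    omega
  have hm1 : ∀ i, i < s → 1 ≤ m (∑ t ∈ range i, b t) := fun i hi => hm.2.1 _ (hBlt i hi)
  have h00 : (0 : ℕ) ∈ range s := Finset.mem_range.2 hs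
  rw [← Finset.mul_prod_erase (range s) _ h00]
  have hh0 : (∑ t ∈ range 0, b t) = 0 := by simp
  have hfirst : ‖((m (∑ t ∈ range 0, b t) : ℂ) ^ a 0)⁻¹‖ ≤ (m 0 : ℝ)⁻¹ := by
    rw [hfac, hh0]
    have hm0 : (1 : ℝ) ≤ (m 0 : ℝ) := by
      have h0N : 0 < N := by have := hBlt 0 hs; omega
      have := hm.2.1 0 h0N
      exact_mod_cast this
    have h2 : (m 0 : ℝ) ≤ (m 0 : ℝ) ^ a 0 :=
      le_self_pow₀ hm0 (Nat.one_le_iff_ne_zero.1 ha0)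
    exact inv_anti₀ (by linarith) h2
  have hrest : ∏ i ∈ (range s).erase 0, ‖((m (∑ t ∈ range i, b t) : ℂ) ^ a i)⁻¹‖ ≤ 1 := by
    refine Finset.prod_le_one (fun i _ => norm_nonneg _) (fun i hi => ?_)
    rw [hfac]
    have hi' : i < s := Finset.mem_range.1 (Finset.mem_of_mem_erase hi)
    have h1 : (1 : ℝ) ≤ (m (∑ t ∈ range i, b t) : ℝ) := by exact_mod_cast hm1 i hi'
    exact inv_le_one_of_one_le₀ (one_le_pow₀ h1)
  calc ‖((m (∑ t ∈ range 0, b t) : ℂ) ^ a 0)⁻¹‖ *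
        ∏ i ∈ (range s).erase 0, ‖((m (∑ t ∈ range i, b t) : ℂ) ^ a i)⁻¹‖
      ≤ (m 0 : ℝ)⁻¹ * 1 := mul_le_mul hfirst hrest
        (Finset.prod_nonneg fun i _ => norm_nonneg _) (by positivity)
  _ = (m 0 : ℝ)⁻¹ := mul_one _

lemma partial_fraction {F : Type*} [Field F] {ι : Type*} [DecidableEq ι]
    (s : Finset ι) (hs : s.Nonempty) (v : ι → F) (hvs : Set.InjOn v s)
    (lam : F) (hl : ∀ i ∈ s, v i ≠ lam) :
    ∏ j ∈ s, (v j - lam)⁻¹ =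
      ∑ j ∈ s, (∏ i ∈ s.erase j, (v i - v j)⁻¹) * (v j - lam)⁻¹ := by
  have h1 := Lagrange.sum_basis hvs hs
  have h2 := congrArg (Polynomial.eval lam) h1
  rw [Polynomial.eval_finset_sum, Polynomial.eval_one] at h2
  have h3 : ∀ j ∈ s, (Lagrange.basis s v j).eval lam =
      (∏ i ∈ s.erase j, (v i - v j)⁻¹) * ∏ i ∈ s.erase j, (v i - lam) := by
    intro j _
    rw [Lagrange.basis, Polynomial.eval_prod, ← Finset.prod_mul_distrib]
    refine Finset.prod_congr rfl fun i hi => ?_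
    rw [Lagrange.basisDivisor, Polynomial.eval_mul, Polynomial.eval_C,
      Polynomial.eval_sub, Polynomial.eval_X, Polynomial.eval_C]
    rw [show v j - v i = -(v i - v j) by ring, show lam - v i = -(v i - lam) by ring,
      inv_neg, neg_mul_neg]
  rw [Finset.sum_congr rfl h3] at h2
  have hQ : ∀ j ∈ s, (∏ i ∈ s.erase j, (v i - lam)) * ∏ i ∈ s, (v i - lam)⁻¹
      = (v j - lam)⁻¹ := by
    intro j hj
    rw [Finset.prod_inv_distrib, ← Finset.mul_prod_erase s _ hj, mul_inv,
      ← mul_assoc, mul_comm (∏ i ∈ s.erase j, (v i - lam)), mul_assoc,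
      mul_inv_cancel₀, mul_one]
    exact Finset.prod_ne_zero_iff.2 fun i hi => sub_ne_zero.2 (hl i (Finset.mem_of_mem_erase hi))
  calc ∏ j ∈ s, (v j - lam)⁻¹ = 1 * ∏ j ∈ s, (v j - lam)⁻¹ := (one_mul _).symm
  _ = (∑ j ∈ s, (∏ i ∈ s.erase j, (v i - v j)⁻¹) * ∏ i ∈ s.erase j, (v i - lam)) *
        ∏ j ∈ s, (v j - lam)⁻¹ := by rw [h2]
  _ = ∑ j ∈ s, (∏ i ∈ s.erase j, (v i - v j)⁻¹) * (v j - lam)⁻¹ := by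
      rw [Finset.sum_mul]
      refine Finset.sum_congr rfl fun j hj => ?_
      rw [mul_assoc, hQ j hj]

end DecTupleAux

open DecTupleAux

/-- **Partial-fraction expansion of the generating function.**
(i) For each fixed `j` the series `Σ_{m₁>⋯>m_{B_s}≥1} |C_{m_j}/(m_j-λ)|` converges; and
(ii) `f((aᵢ,bᵢ)ᵢ₌₁ˢ;λ) = Σ_{p=1}^∞ r_p/(p-λ)` where
`r_p = Σ_j Σ_{m₁>⋯>m_{j-1}>p>m_{j+1}>⋯≥1} C_p`. -/
theorem genF_partial_fraction (s : ℕ) (hs : 1 ≤ s) (a b : ℕ → ℕ)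
    (ha : ∀ i, i < s → 1 ≤ a i) (hb : ∀ i, i < s → 1 ≤ b i)
    (lam : ℂ) (hlam : ∀ p : ℕ, 0 < p → lam ≠ (p : ℂ)) :
    (∀ j, j < ∑ t ∈ Finset.range s, b t →
      Summable (fun m : DecTuple (∑ t ∈ Finset.range s, b t) =>
        ‖Ccoef s a b m.1 j * ((m.1 j : ℂ) - lam)⁻¹‖)) ∧
    Summable (fun p : ℕ => resCoef s a b (p + 1) * (((p : ℂ) + 1) - lam)⁻¹) ∧
    genF s a b lam = ∑' p : ℕ, resCoef s a b (p + 1) * (((p : ℂ) + 1) - lam)⁻¹ := by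
  classical
  set N : ℕ := ∑ t ∈ Finset.range s, b t with hNdef
  have hN : 0 < N := by
    have h1 : b 0 ≤ N :=
      Finset.single_le_sum (f := b) (fun i _ => Nat.zero_le _) (Finset.mem_range.2 hs)
    have := hb 0 hs
    omega
  obtain ⟨C, hC0, hCb⟩ := exists_lam_bound lam
  have hNRpos : (0 : ℝ) < (N : ℝ) := by exact_mod_cast hN
  have heneg : -(1 + (N : ℝ)⁻¹) < -1 := by
    have : (0 : ℝ) < (N : ℝ)⁻¹ := by positivity
    linarith
  set D : (ℕ → ℕ) → ℝ :=
    fun m => ∏ k : Fin N, ((m k - m (k + 1) : ℕ) : ℝ) ^ (-(1 + (N : ℝ)⁻¹)) with hD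
  have hD0 : ∀ m, 0 ≤ D m :=
    fun m => Finset.prod_nonneg fun k _ => Real.rpow_nonneg (Nat.cast_nonneg _) _
  have hDsum : Summable fun m : DecTuple N => D m.1 := by
    have hh : Summable fun v : ℕ => ((v : ℝ) + 1) ^ (-(1 + (N : ℝ)⁻¹)) := summable_h heneg
    have h1 := summable_pi_prod (fun v => Real.rpow_nonneg (by positivity) _) hh N
    have hinj : Function.Injective fun m : DecTuple N => gmap N m.1 := by
      intro x y h
      exact Subtype.ext (gmap_inj x.2 y.2 h)
    have h2 := h1.comp_injective hinj
    refine h2.congr fun m => ?_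
    simp only [Function.comp_apply, hD]
    refine Finset.prod_congr rfl fun k _ => ?_
    congr 1
    rw [← gmap_add_one m.2 k]
    push_cast
    ring
  -- claim (i)
  have hSj : ∀ j, j < N → Summable (fun m : DecTuple N =>
      ‖Ccoef s a b m.1 j * ((m.1 j : ℂ) - lam)⁻¹‖) := by
    intro j hj
    have hbound2 : ∀ m : DecTuple N,
        ‖Ccoef s a b m.1 j * ((m.1 j : ℂ) - lam)⁻¹‖ ≤ C * D m.1 := by
      intro m
      have hm := m.2
      rw [Ccoef, ← hNdef, norm_mul, norm_mul, norm_prod, norm_prod]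
      set E : ℝ := ∏ i ∈ (Finset.range N).erase j, ‖((m.1 i : ℂ) - (m.1 j : ℂ))‖ with hE
      have hEfac : ∀ i ∈ (Finset.range N).erase j, (0:ℝ) < ‖((m.1 i : ℂ) - (m.1 j : ℂ))‖ := by
        intro i hi
        rw [Finset.mem_erase, Finset.mem_range] at hi
        have hne : m.1 i ≠ m.1 j := by
          rcases lt_or_gt_of_ne hi.1 with h | h
          · exact (strict hm h hj).ne'
          · exact (strict hm h hi.2).ne
        have hne2 : ((m.1 i : ℂ)) - (m.1 j : ℂ) ≠ 0 :=
          sub_ne_zero.2 (by exact_mod_cast hne)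
        exact norm_pos_iff.2 hne2
      have hEpos : 0 < E := Finset.prod_pos hEfac
      have hprodinv : ∏ i ∈ (Finset.range N).erase j, ‖((m.1 i : ℂ) - (m.1 j : ℂ))⁻¹‖ = E⁻¹ := by
        rw [hE, ← Finset.prod_inv_distrib]
        exact Finset.prod_congr rfl fun i _ => norm_inv _
      rw [hprodinv]
      have hpow := pow_prod_le (a := a) (b := b) hm hs (ha 0 hs) hb hNdef
      have hmj1 : 1 ≤ m.1 j := hm.2.1 j hj
      have hCmj := hCb (m.1 j) hmj1
      have hepb := erase_prod_bound hm hj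
      have hPd0 : (0:ℝ) < ∏ k : Fin N, ((m.1 k - m.1 (k + 1) : ℕ) : ℝ) := by
        refine Finset.prod_pos fun k _ => ?_
        have h1 := gap_ge_one hm k.2
        have h2 : (1:ℝ) ≤ ((m.1 k - m.1 (k + 1) : ℕ) : ℝ) := by exact_mod_cast h1
        linarith
      have hmjpos : (0:ℝ) < (m.1 j : ℝ) := by exact_mod_cast hmj1
      have hm0pos : (0:ℝ) < (m.1 0 : ℝ) := by
        have := hm.2.1 0 hN
        exact_mod_cast this
      have hkey := key_ineq hN hm (fun k => ((m.1 k - m.1 (k + 1) : ℕ) : ℝ)) (fun k => le_rfl)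
      have hinvE : E⁻¹ * (m.1 j : ℝ)⁻¹ ≤ (∏ k : Fin N, ((m.1 k - m.1 (k + 1) : ℕ) : ℝ))⁻¹ := by
        rw [← mul_inv]
        exact inv_anti₀ hPd0 hepb
      calc (∏ i ∈ Finset.range s, ‖((m.1 (∑ t ∈ Finset.range i, b t) : ℂ) ^ a i)⁻¹‖) * E⁻¹ *
            ‖((m.1 j : ℂ) - lam)⁻¹‖
          ≤ (m.1 0 : ℝ)⁻¹ * E⁻¹ * (C * (m.1 j : ℝ)⁻¹) := by
            refine mul_le_mul (mul_le_mul hpow le_rfl (by positivity) (by positivity)) hCmj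
              (norm_nonneg _) (by positivity)
      _ = C * ((m.1 0 : ℝ)⁻¹ * (E⁻¹ * (m.1 j : ℝ)⁻¹)) := by ring
      _ ≤ C * ((m.1 0 : ℝ)⁻¹ * (∏ k : Fin N, ((m.1 k - m.1 (k + 1) : ℕ) : ℝ))⁻¹) := by
            refine mul_le_mul_of_nonneg_left (mul_le_mul_of_nonneg_left hinvE (by positivity)) hC0.le
      _ = C * ((m.1 0 : ℝ)⁻¹ * ∏ k : Fin N, ((m.1 k - m.1 (k + 1) : ℕ) : ℝ)⁻¹) := by
            rw [Finset.prod_inv_distrib]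
      _ ≤ C * D m.1 := by
            refine mul_le_mul_of_nonneg_left ?_ hC0.le
            simpa only [hD] using hkey
    exact Summable.of_nonneg_of_le (fun m => norm_nonneg _) hbound2 (hDsum.mul_left C)
  -- summability of the genF summand
  set f : ℕ → DecTuple N → ℂ :=
    fun j m => Ccoef s a b m.1 j * ((m.1 j : ℂ) - lam)⁻¹ with hf
  have hfs : ∀ j ∈ Finset.range N, Summable (f j) :=
    fun j hj => ((hSj j (Finset.mem_range.1 hj)).of_norm)
  -- partial fraction identity per tuple
  have hPF : ∀ m : DecTuple N,
      (∏ i ∈ Finset.range s,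
        ((m.1 (∑ t ∈ Finset.range i, b t) : ℂ) ^ a i)⁻¹ *
          ∏ j ∈ Finset.Ico (∑ t ∈ Finset.range i, b t) (∑ t ∈ Finset.range (i + 1), b t),
            ((m.1 j : ℂ) - lam)⁻¹) = ∑ j ∈ Finset.range N, f j m := by
    intro m
    have hm := m.2
    rw [Finset.prod_mul_distrib, block_prod b (fun j => ((m.1 j : ℂ) - lam)⁻¹) s, ← hNdef]
    have hinj : Set.InjOn (fun i => (m.1 i : ℂ)) (Finset.range N) := by
      intro i hi j' hj' hij
      simp only [Finset.coe_range, Set.mem_Iio] at hi hj'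
      have hij2 : ((m.1 i : ℂ)) = (m.1 j' : ℂ) := hij
      have hv : m.1 i = m.1 j' := by exact_mod_cast hij2
      by_contra hne
      rcases lt_or_gt_of_ne hne with h | h
      · exact absurd hv (strict hm h hj').ne'
      · exact absurd hv (strict hm h hi).ne
    have hl : ∀ i ∈ Finset.range N, (m.1 i : ℂ) ≠ lam := by
      intro i hi hcontra
      exact hlam (m.1 i) (hm.2.1 i (Finset.mem_range.1 hi)) hcontra.symm
    rw [partial_fraction (Finset.range N) ⟨0, Finset.mem_range.2 hN⟩
      (fun i => (m.1 i : ℂ)) hinj lam hl, Finset.mul_sum]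
    refine Finset.sum_congr rfl fun j hj => ?_
    simp only [hf]
    rw [Ccoef, ← hNdef]
    ring
  -- fiber decomposition
  set A : ℕ → ℕ → ℂ := fun j c =>
    (∑' mm : {m : ℕ → ℕ // m ∈ DecTuple N ∧ m j = c}, Ccoef s a b mm.1 j) *
      ((c : ℂ) - lam)⁻¹ with hA
  have hstep : ∀ j, j < N →
      Summable (A j) ∧ (∑' m : DecTuple N, f j m = ∑' p : ℕ, A j (p + 1)) := by
    intro j hj
    set q : DecTuple N → ℕ := fun m => m.1 j with hqd
    have hsig : Summable (fun σ : (c : ℕ) × {x : DecTuple N // q x = c} =>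
        f j ((Equiv.sigmaFiberEquiv q) σ)) :=
      (hfs j (Finset.mem_range.2 hj)).comp_injective (Equiv.injective _)
    have h2 : ∀ c : ℕ, (∑' x : {x : DecTuple N // q x = c},
        f j ((Equiv.sigmaFiberEquiv q) ⟨c, x⟩)) = A j c := by
      intro c
      let e2 : {m : ℕ → ℕ // m ∈ DecTuple N ∧ m j = c} ≃ {x : DecTuple N // q x = c} :=
        ⟨fun y => ⟨⟨y.1, y.2.1⟩, y.2.2⟩, fun x => ⟨x.1.1, x.1.2, x.2⟩,
          fun y => rfl, fun x => rfl⟩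
      rw [← Equiv.tsum_eq e2]
      show (∑' y : {m : ℕ → ℕ // m ∈ DecTuple N ∧ m j = c},
          f j ((Equiv.sigmaFiberEquiv q) ⟨c, e2 y⟩)) =
        (∑' mm : {m : ℕ → ℕ // m ∈ DecTuple N ∧ m j = c}, Ccoef s a b mm.1 j) *
          ((c : ℂ) - lam)⁻¹
      rw [← tsum_mul_right]
      refine tsum_congr fun y => ?_
      have hyj : y.1 j = c := y.2.2
      show f j ⟨y.1, y.2.1⟩ = Ccoef s a b y.1 j * ((c : ℂ) - lam)⁻¹
      simp only [hf]
      rw [hyj]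
    have hAsum : Summable (A j) := hsig.sigma.congr h2
    constructor
    · exact hAsum
    have h1 : ∑' m : DecTuple N, f j m =
        ∑' σ : (c : ℕ) × {x : DecTuple N // q x = c},
          f j ((Equiv.sigmaFiberEquiv q) σ) :=
      (Equiv.tsum_eq (Equiv.sigmaFiberEquiv q) (f j)).symm
    rw [h1, hsig.tsum_sigma, tsum_congr h2, hAsum.tsum_eq_zero_add]

    have hzero : A j 0 = 0 := by
      have hIE : IsEmpty {m : ℕ → ℕ // m ∈ DecTuple N ∧ m j = 0} :=
        ⟨fun y => by have := y.2.1.2.1 j hj; omega⟩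
      rw [hA]
      simp only
      rw [tsum_empty (β := {m : ℕ → ℕ // m ∈ DecTuple N ∧ m j = 0}), zero_mul]
    rw [hzero, zero_add]
  have hGsum : ∀ j ∈ Finset.range N, Summable (fun p : ℕ => A j (p + 1)) :=
    fun j hj => (summable_nat_add_iff 1).2 (hstep j (Finset.mem_range.1 hj)).1
  have hgoal_fun : ∀ p : ℕ, (∑ j ∈ Finset.range N, A j (p + 1)) =
      resCoef s a b (p + 1) * (((p : ℂ) + 1) - lam)⁻¹ := by
    intro p
    rw [resCoef, ← hNdef, Finset.sum_mul]
    refine Finset.sum_congr rfl fun j hj => ?_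
    rw [hA]
    congr 1
    push_cast
    ring
  have hmid : Summable (fun p : ℕ => resCoef s a b (p + 1) * (((p : ℂ) + 1) - lam)⁻¹) :=
    (summable_sum hGsum).congr hgoal_fun
  have hgen1 : genF s a b lam = ∑ j ∈ Finset.range N, ∑' m : DecTuple N, f j m := by
    rw [genF, ← hNdef, tsum_congr hPF]
    exact Summable.tsum_finsetSum hfs
  refine ⟨hSj, hmid, ?_⟩
  calc genF s a b lam = ∑ j ∈ Finset.range N, ∑' m : DecTuple N, f j m := hgen1
  _ = ∑ j ∈ Finset.range N, ∑' p : ℕ, A j (p + 1) :=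
      Finset.sum_congr rfl fun j hj => (hstep j (Finset.mem_range.1 hj)).2
  _ = ∑' p : ℕ, ∑ j ∈ Finset.range N, A j (p + 1) := (Summable.tsum_finsetSum hGsum).symm
  _ = ∑' p : ℕ, resCoef s a b (p + 1) * (((p : ℂ) + 1) - lam)⁻¹ := tsum_congr hgoal_fun
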